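/- Let p be a primitive element of F(x,y) with exponent sum pair (X,Y). An element r of F(x,y) lies in the normal closure of p if and only if the exponent sum pair of r equals (kX, kY) for some integer k. -/
import Mathlib


abbrev F2 := FreeGroup (Fin 2)

/-- The generator `x` of the free group of rank 2. -/
def xg : F2 := FreeGroup.of 0

/-- The generator `y` of the free group of rank 2. -/
def yg : F2 := FreeGroup.of 1

/-- The exponent sum of the `i`-th generator in a word `w`. -/
def expSum (i : Fin 2) (w : F2) : ℤ :=
  Multiplicative.toAdd
    ((FreeGroup.lift fun j => Multiplicative.ofAdd (if j = i then (1 : ℤ) else 0)) w)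

/-- An element is primitive if it is the image of `x` under an automorphism. -/
def IsPrimitive (w : F2) : Prop := ∃ θ : F2 ≃* F2, θ xg = w

/-- A palindrome: the reduced word reads the same forwards and backwards. -/
def IsPalindrome (w : F2) : Prop := w.toWord.reverse = w.toWord

/-- Only positive exponents appear in the reduced word of `w`. -/
def PosWord (w : F2) : Prop := ∀ l ∈ w.toWord, l.2 = true

/-- The exponent-sum homomorphism. -/
def Ehom (i : Fin 2) : F2 →* Multiplicative ℤ :=
  FreeGroup.lift fun j => Multiplicative.ofAdd (if j = i then (1 : ℤ) else 0)

lemma expSum_eq (i : Fin 2) (w : F2) : expSum i w = Multiplicative.toAdd (Ehom i w) := rfl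

lemma expSum_xg (i : Fin 2) : expSum i xg = if (0 : Fin 2) = i then 1 else 0 := by
  simp [expSum, xg]

lemma expSum_yg (i : Fin 2) : expSum i yg = if (1 : Fin 2) = i then 1 else 0 := by
  simp [expSum, yg]

lemma comp_expSum (f : F2 →* F2) (i : Fin 2) (w : F2) :
    expSum i (f w) = expSum 0 w * expSum i (f xg) + expSum 1 w * expSum i (f yg) := by
  set A := expSum i (f xg) with hA
  set B := expSum i (f yg) with hB
  have key : (Ehom i).comp f =
      ((zpowersHom (Multiplicative ℤ) (Multiplicative.ofAdd A)).comp (Ehom 0)) *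
      ((zpowersHom (Multiplicative ℤ) (Multiplicative.ofAdd B)).comp (Ehom 1)) := by
    apply FreeGroup.ext_hom
    intro j
    fin_cases j <;>
      simp [Ehom, xg, yg, expSum, hA, hB, zpowersHom_apply, ← ofAdd_zsmul]
  have h := congrArg Multiplicative.toAdd (DFunLike.congr_fun key w)
  simpa [expSum_eq, zpowersHom_apply, mul_comm, ← ofAdd_zsmul, smul_eq_mul] using h

lemma mem_normalClosure_xg_iff (w : F2) :
    w ∈ Subgroup.normalClosure {xg} ↔ expSum 1 w = 0 := by
  constructor
  · intro hw
    have hle : Subgroup.normalClosure {xg} ≤ (Ehom 1).ker := by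
      apply Subgroup.normalClosure_le_normal
      intro z hz
      simp only [Set.mem_singleton_iff] at hz
      subst hz
      simp [MonoidHom.mem_ker, Ehom, xg]
    have := hle hw
    rw [MonoidHom.mem_ker] at this
    rw [expSum_eq, this]
    rfl
  · intro hw
    have key : ((QuotientGroup.mk' (Subgroup.normalClosure ({xg} : Set F2))).comp
          (zpowersHom F2 yg)).comp (Ehom 1) =
        QuotientGroup.mk' (Subgroup.normalClosure ({xg} : Set F2)) := by
      apply FreeGroup.ext_hom
      intro j
      fin_cases j
      · simp only [MonoidHom.comp_apply, Ehom, FreeGroup.lift_apply_of]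
        norm_num
        symm
        rw [QuotientGroup.eq_one_iff]
        exact Subgroup.subset_normalClosure rfl
      · simp only [MonoidHom.comp_apply, Ehom, FreeGroup.lift_apply_of]
        norm_num [yg]
    have h1 : Ehom 1 w = 1 := by
      have : Multiplicative.toAdd (Ehom 1 w) = 0 := hw
      exact Multiplicative.toAdd.injective this
    have h2 := DFunLike.congr_fun key w
    simp only [MonoidHom.comp_apply, h1, map_one] at h2
    have h3 : (QuotientGroup.mk' (Subgroup.normalClosure ({xg} : Set F2))) w = 1 := h2.symm
    rwa [QuotientGroup.mk'_apply, QuotientGroup.eq_one_iff] at h3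

theorem mem_normalClosure_primitive_iff (p : F2) (hp : IsPrimitive p) (X Y : ℤ)
    (hX : expSum 0 p = X) (hY : expSum 1 p = Y) (r : F2) :
    r ∈ Subgroup.normalClosure {p} ↔
      ∃ k : ℤ, expSum 0 r = k * X ∧ expSum 1 r = k * Y := by
  obtain ⟨θ, hθ⟩ := hp
  have transfer : r ∈ Subgroup.normalClosure {p} ↔ θ.symm r ∈ Subgroup.normalClosure {xg} := by
    constructor
    · intro hr
      have hle : Subgroup.normalClosure {p} ≤
          (Subgroup.normalClosure {xg}).comap θ.symm.toMonoidHom := by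
        apply Subgroup.normalClosure_le_normal
        intro z hz
        simp only [Set.mem_singleton_iff] at hz
        subst hz
        simp only [SetLike.mem_coe, Subgroup.mem_comap, MulEquiv.coe_toMonoidHom]
        rw [← hθ, MulEquiv.symm_apply_apply]
        exact Subgroup.subset_normalClosure (Set.mem_singleton _)
      exact hle hr
    · intro hr
      have hle : Subgroup.normalClosure {xg} ≤
          (Subgroup.normalClosure {p}).comap θ.toMonoidHom := by
        apply Subgroup.normalClosure_le_normal
        intro z hz
        simp only [Set.mem_singleton_iff] at hz
        subst hz
        simp only [SetLike.mem_coe, Subgroup.mem_comap, MulEquiv.coe_toMonoidHom, hθ]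
        exact Subgroup.subset_normalClosure (Set.mem_singleton _)
      have := hle hr
      simpa [Subgroup.mem_comap] using this
  rw [transfer, mem_normalClosure_xg_iff]
  have hr0 := comp_expSum θ.toMonoidHom 0 (θ.symm r)
  have hr1 := comp_expSum θ.toMonoidHom 1 (θ.symm r)
  simp only [MulEquiv.coe_toMonoidHom, MulEquiv.apply_symm_apply, hθ] at hr0 hr1
  constructor
  · intro hb
    refine ⟨expSum 0 (θ.symm r), ?_, ?_⟩
    · rw [hr0, hb, hX]; ring
    · rw [hr1, hb, hY]; ring
  · rintro ⟨k, h0, h1⟩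
    have i1 := comp_expSum θ.symm.toMonoidHom 1 p
    have i2 := comp_expSum θ.symm.toMonoidHom 1 (θ yg)
    simp only [MulEquiv.coe_toMonoidHom] at i1 i2
    have hsp : θ.symm p = xg := by rw [← hθ, MulEquiv.symm_apply_apply]
    have hsy : θ.symm (θ yg) = yg := MulEquiv.symm_apply_apply θ yg
    rw [hsp, expSum_xg] at i1
    rw [hsy, expSum_yg] at i2
    norm_num at i1 i2
    rw [hX, hY] at i1
    rw [h0, hX] at hr0
    rw [h1, hY] at hr1
    set a := expSum 0 (θ.symm r)
    set b := expSum 1 (θ.symm r)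
    set U := expSum 0 (θ yg)
    set V := expSum 1 (θ yg)
    set Q := expSum 1 (θ.symm xg)
    set S := expSum 1 (θ.symm yg)
    linear_combination (-Q) * hr0 + (-S) * hr1 + (a - k) * i1 + b * i2
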